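/- Let a < b be real numbers and ρ > 0. Let u, v : ℝ → ℝ be differentiable at every point of [a, b] with derivative functions u' and v', assume u' and v' are square-integrable on (a, b), and assume v(x) ≥ ρ for all x ∈ [a, b]. Then the function w(x) := u(x)·|u(x)| / v(x) is differentiable at every point x ∈ [a, b] with w'(x) = ( 2·|u(x)|·u'(x)·v(x) − u(x)·|u(x)|·v'(x) ) / v(x)², and both w and w' are square-integrable on (a, b). -/

import Mathlib

open MeasureTheory

lemma hasDerivAt_mul_abs (x : ℝ) : HasDerivAt (fun y : ℝ => y * |y|) (2 * |x|) x := by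
  rcases lt_trichotomy x 0 with hx | hx | hx
  · have heq : (fun y : ℝ => y * |y|) =ᶠ[nhds x] fun y => -(y * y) := by
      filter_upwards [eventually_lt_nhds hx] with y hy
      rw [abs_of_neg hy]; ring
    have h : HasDerivAt (fun y : ℝ => -(y * y)) (2 * |x|) x := by
      have h0 : HasDerivAt (fun y : ℝ => -(y * y)) (-(1 * id x + id x * 1)) x :=
        ((hasDerivAt_id x).mul (hasDerivAt_id x)).neg
      convert h0 using 1
      rw [abs_of_neg hx]; simp; ring
    exact h.congr_of_eventuallyEq heq
  · subst hx
    rw [hasDerivAt_iff_isLittleO]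
    rw [Asymptotics.isLittleO_iff]
    intro c hc
    filter_upwards [Metric.ball_mem_nhds 0 hc] with y hy
    have h1 : |y| < c := by simpa [Real.dist_eq] using hy
    simp only [abs_zero, mul_zero, sub_zero, smul_eq_mul, zero_mul, mul_zero,
      Real.norm_eq_abs, abs_mul, abs_abs]
    nlinarith [abs_nonneg y]
  · have heq : (fun y : ℝ => y * |y|) =ᶠ[nhds x] fun y => y * y := by
      filter_upwards [eventually_gt_nhds hx] with y hy
      rw [abs_of_pos hy]
    have h : HasDerivAt (fun y : ℝ => y * y) (2 * |x|) x := by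
      have h0 : HasDerivAt (fun y : ℝ => y * y) (1 * id x + id x * 1) x :=
        (hasDerivAt_id x).mul (hasDerivAt_id x)
      convert h0 using 1
      rw [abs_of_pos hx]; simp; ring
    exact h.congr_of_eventuallyEq heq

/-- Lemma 4.6: quotient rule and square integrability for
`w = u·|u|/v` when `v ≥ ρ > 0` on `[a,b]` and `u', v'` are square integrable. -/
theorem quotient_rule_u_abs_u_div_v
    (a b ρ : ℝ) (hab : a < b) (hρ : 0 < ρ)
    (u v u' v' : ℝ → ℝ)
    (hu : ∀ x ∈ Set.Icc a b, HasDerivAt u (u' x) x)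
    (hv : ∀ x ∈ Set.Icc a b, HasDerivAt v (v' x) x)
    (hu' : MemLp u' 2 (volume.restrict (Set.Ioo a b)))
    (hv' : MemLp v' 2 (volume.restrict (Set.Ioo a b)))
    (hvρ : ∀ x ∈ Set.Icc a b, ρ ≤ v x) :
    (∀ x ∈ Set.Icc a b,
      HasDerivAt (fun y => u y * |u y| / v y)
        ((2 * |u x| * u' x * v x - u x * |u x| * v' x) / (v x) ^ 2) x) ∧
    MemLp (fun x => u x * |u x| / v x) 2 (volume.restrict (Set.Ioo a b)) ∧
    MemLp (fun x => (2 * |u x| * u' x * v x - u x * |u x| * v' x) / (v x) ^ 2) 2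
      (volume.restrict (Set.Ioo a b)) := by
  haveI : IsFiniteMeasure (volume.restrict (Set.Ioo a b)) := by
    constructor
    rw [Measure.restrict_apply_univ, Real.volume_Ioo]
    exact ENNReal.ofReal_lt_top
  -- derivative
  have hderiv : ∀ x ∈ Set.Icc a b,
      HasDerivAt (fun y => u y * |u y| / v y)
        ((2 * |u x| * u' x * v x - u x * |u x| * v' x) / (v x) ^ 2) x := by
    intro x hx
    have hvx : v x ≠ 0 := by linarith [hvρ x hx]
    have hnum : HasDerivAt (fun y => u y * |u y|) (2 * |u x| * u' x) x := by
      have := (hasDerivAt_mul_abs (u x)).comp x (hu x hx)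
      simpa [mul_assoc, Function.comp_def] using this
    exact hnum.div (hv x hx) hvx
  -- continuity / measurability facts
  have hu_c : ContinuousOn u (Set.Icc a b) := fun x hx => (hu x hx).continuousAt.continuousWithinAt
  have hv_c : ContinuousOn v (Set.Icc a b) := fun x hx => (hv x hx).continuousAt.continuousWithinAt
  have hsub : Set.Ioo a b ⊆ Set.Icc a b := Set.Ioo_subset_Icc_self
  have hum : AEStronglyMeasurable u (volume.restrict (Set.Ioo a b)) :=
    (hu_c.mono hsub).aestronglyMeasurable measurableSet_Ioo
  have hvm : AEStronglyMeasurable v (volume.restrict (Set.Ioo a b)) :=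
    (hv_c.mono hsub).aestronglyMeasurable measurableSet_Ioo
  have hum_abs : AEStronglyMeasurable (fun x => |u x|) (volume.restrict (Set.Ioo a b)) := by
    simpa [Real.norm_eq_abs] using hum.norm
  -- bounds on u and v
  obtain ⟨M, hM⟩ := (isCompact_Icc).exists_bound_of_continuousOn hu_c
  obtain ⟨K, hK⟩ := (isCompact_Icc).exists_bound_of_continuousOn hv_c
  have hM0 : 0 ≤ M := le_trans (norm_nonneg _) (hM a (Set.left_mem_Icc.mpr hab.le))
  have hK0 : 0 ≤ K := le_trans (norm_nonneg _) (hK a (Set.left_mem_Icc.mpr hab.le))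
  have hρ2 : (0:ℝ) < ρ ^ 2 := by positivity
  have part2 : MemLp (fun x => u x * |u x| / v x) 2 (volume.restrict (Set.Ioo a b)) := by
    have hwm : AEStronglyMeasurable (fun x => u x * |u x| / v x) (volume.restrict (Set.Ioo a b)) :=
      ((hum.mul hum_abs).aemeasurable.div hvm.aemeasurable).aestronglyMeasurable
    refine MemLp.of_le (memLp_const (M ^ 2 / ρ)) hwm ?_
    rw [ae_restrict_iff' measurableSet_Ioo]
    refine ae_of_all _ fun x hx => ?_
    have hx' := hsub hx
    have hvx : ρ ≤ v x := hvρ x hx'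
    have hMx : |u x| ≤ M := by simpa [Real.norm_eq_abs] using hM x hx'
    have h1 : ‖u x * |u x| / v x‖ = |u x| * |u x| / v x := by
      rw [Real.norm_eq_abs, abs_div, abs_mul, abs_abs, abs_of_pos (lt_of_lt_of_le hρ hvx)]
    rw [h1]
    have h2 : |u x| * |u x| / v x ≤ M ^ 2 / ρ := by
      apply div_le_div₀ (by positivity) (by nlinarith [abs_nonneg (u x)]) hρ hvx
    calc |u x| * |u x| / v x ≤ M ^ 2 / ρ := h2
      _ ≤ ‖M ^ 2 / ρ‖ := le_abs_self _
  have part3 : MemLp (fun x => (2 * |u x| * u' x * v x - u x * |u x| * v' x) / (v x) ^ 2) 2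
      (volume.restrict (Set.Ioo a b)) := by
    set C1 := 2 * M * K / ρ ^ 2 with hC1
    set C2 := M ^ 2 / ρ ^ 2 with hC2
    have hg : MemLp (fun x => C1 * |u' x| + C2 * |v' x|) 2 (volume.restrict (Set.Ioo a b)) :=
      (hu'.abs.const_mul C1).add (hv'.abs.const_mul C2)
    have hwm : AEStronglyMeasurable
        (fun x => (2 * |u x| * u' x * v x - u x * |u x| * v' x) / (v x) ^ 2) (volume.restrict (Set.Ioo a b)) := by
      have h1 : AEStronglyMeasurable (fun x => 2 * |u x| * u' x * v x) (volume.restrict (Set.Ioo a b)) :=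
        ((aestronglyMeasurable_const.mul hum_abs).mul hu'.1).mul hvm
      have h2 : AEStronglyMeasurable (fun x => u x * |u x| * v' x) (volume.restrict (Set.Ioo a b)) :=
        (hum.mul hum_abs).mul hv'.1
      exact ((h1.sub h2).aemeasurable.div (hvm.aemeasurable.pow_const 2)).aestronglyMeasurable
    refine MemLp.of_le hg hwm ?_
    rw [ae_restrict_iff' measurableSet_Ioo]
    refine ae_of_all _ fun x hx => ?_
    have hx' := hsub hx
    have hvx : ρ ≤ v x := hvρ x hx'
    have hMx : |u x| ≤ M := by simpa [Real.norm_eq_abs] using hM x hx'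
    have hKx : |v x| ≤ K := by simpa [Real.norm_eq_abs] using hK x hx'
    have hv2 : ρ ^ 2 ≤ (v x) ^ 2 := by nlinarith
    have hnum : |2 * |u x| * u' x * v x - u x * |u x| * v' x|
        ≤ 2 * M * K * |u' x| + M ^ 2 * |v' x| := by
      calc |2 * |u x| * u' x * v x - u x * |u x| * v' x|
          ≤ |2 * |u x| * u' x * v x| + |u x * |u x| * v' x| := abs_sub _ _
        _ = 2 * |u x| * |u' x| * |v x| + |u x| * |u x| * |v' x| := by
            simp only [abs_mul, abs_abs, abs_two]
        _ ≤ 2 * M * K * |u' x| + M ^ 2 * |v' x| := by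
            have h0 := abs_nonneg (u x); have h1 := abs_nonneg (u' x)
            have h2 := abs_nonneg (v x); have h3 := abs_nonneg (v' x)
            nlinarith [mul_le_mul_of_nonneg_right (mul_le_mul hMx hKx h2 hM0) h1,
              mul_le_mul_of_nonneg_right (mul_le_mul hMx hMx h0 hM0) h3]
    have hgx : 0 ≤ C1 * |u' x| + C2 * |v' x| := by
      have : 0 ≤ C1 := by positivity
      have : 0 ≤ C2 := by positivity
      positivity
    rw [Real.norm_eq_abs, Real.norm_eq_abs, abs_div, abs_of_nonneg hgx,
      abs_of_nonneg (by positivity : (0:ℝ) ≤ (v x)^2)]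
    calc |2 * |u x| * u' x * v x - u x * |u x| * v' x| / (v x) ^ 2
        ≤ (2 * M * K * |u' x| + M ^ 2 * |v' x|) / ρ ^ 2 :=
          div_le_div₀ (by positivity) hnum hρ2 hv2
      _ = C1 * |u' x| + C2 * |v' x| := by rw [hC1, hC2]; ring
  exact ⟨hderiv, part2, part3⟩
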